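/- Let y : I → ℝ be a positive twice-differentiable solution of y'' + y^(k₂) y' + μ₁ y^(2k₂+1) = 0 on an open interval I, with k₂ ≠ 0, k₂ ≠ −1, μ₁ real. Suppose φ : I → ℝ satisfies φ'(x) = y(x)^(k₂) with φ a bijection onto an interval and differentiable inverse ψ. Then u(t) := y(ψ(t))^(k₂+1) satisfies u'' + u' + μ₁(k₂+1)u = 0. -/

import Mathlib

/-- The generalized Sundman transformation u = y^(k₂+1), dt = y^(k₂) dx maps positive
solutions of y'' + y^(k₂) y' + μ₁ y^(2k₂+1) = 0 to solutions of
u'' + u' + μ₁(k₂+1)u = 0. -/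
theorem stmt_13 (k₂ μ₁ : ℝ) (hk0 : k₂ ≠ 0) (hk1 : k₂ ≠ -1)
    (I : Set ℝ) (hI : IsOpen I) (y φ ψ : ℝ → ℝ)
    (hpos : ∀ x ∈ I, 0 < y x)
    (hy1 : ∀ x ∈ I, DifferentiableAt ℝ y x)
    (hy2 : ∀ x ∈ I, DifferentiableAt ℝ (deriv y) x)
    (hode : ∀ x ∈ I,
      deriv (deriv y) x + (y x) ^ k₂ * deriv y x + μ₁ * (y x) ^ (2 * k₂ + 1) = 0)
    (hφ : ∀ x ∈ I, HasDerivAt φ ((y x) ^ k₂) x)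
    (hinv : ∀ x ∈ I, ψ (φ x) = x)
    (hψ : ∀ t ∈ φ '' I, DifferentiableAt ℝ ψ t) :
    ∀ t ∈ φ '' I,
      deriv (deriv (fun s : ℝ => (y (ψ s)) ^ (k₂ + 1))) t
        + deriv (fun s : ℝ => (y (ψ s)) ^ (k₂ + 1)) t
        + μ₁ * (k₂ + 1) * (y (ψ t)) ^ (k₂ + 1) = 0 := by
  -- derivative of ψ at points of φ '' I
  have hψd : ∀ x ∈ I, HasDerivAt ψ ((y x) ^ (-k₂)) (φ x) := by
    intro x hx
    have hyx := hpos x hx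
    have hd : HasDerivAt ψ (deriv ψ (φ x)) (φ x) :=
      (hψ (φ x) ⟨x, hx, rfl⟩).hasDerivAt
    have hcomp : HasDerivAt (ψ ∘ φ) (deriv ψ (φ x) * (y x) ^ k₂) x :=
      hd.comp x (hφ x hx)
    have hid : HasDerivAt (ψ ∘ φ) 1 x := by
      have hev : (ψ ∘ φ) =ᶠ[nhds x] id := by
        filter_upwards [hI.mem_nhds hx] with z hz using hinv z hz
      exact (hasDerivAt_id x).congr_of_eventuallyEq hev
    have h1 : deriv ψ (φ x) * (y x) ^ k₂ = 1 := hcomp.unique hid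
    have hval : deriv ψ (φ x) = (y x) ^ (-k₂) := by
      rw [Real.rpow_neg hyx.le]
      exact eq_inv_of_mul_eq_one_left h1
    rw [← hval]; exact hd
  -- φ '' I is open
  have hopen : IsOpen (φ '' I) := by
    rw [isOpen_iff_mem_nhds]
    rintro t ⟨x, hx, rfl⟩
    obtain ⟨δ, hδ, hball⟩ := Metric.isOpen_iff.1 hI x hx
    set a := x - δ/2 with ha
    set b := x + δ/2 with hb
    have hab : Set.Icc a b ⊆ I := by
      intro z hz
      apply hball
      rw [Metric.mem_ball, Real.dist_eq, abs_lt]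
      obtain ⟨h1, h2⟩ := hz
      constructor <;> [skip; skip] <;> simp only [ha, hb] at h1 h2 <;> linarith
    have hcont : ContinuousOn φ (Set.Icc a b) := fun z hz =>
      ((hφ z (hab hz)).continuousAt).continuousWithinAt
    have hmono : StrictMonoOn φ (Set.Icc a b) := by
      apply strictMonoOn_of_deriv_pos (convex_Icc a b) hcont
      intro z hz
      rw [interior_Icc] at hz
      have hz' : z ∈ I := hab (Set.Ioo_subset_Icc_self hz)
      rw [(hφ z hz').deriv]
      exact Real.rpow_pos_of_pos (hpos z hz') k₂
    have haI : a ∈ Set.Icc a b := by constructor <;> simp only [ha, hb] <;> linarith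
    have hbI : b ∈ Set.Icc a b := by constructor <;> simp only [ha, hb] <;> linarith
    have hxI : x ∈ Set.Icc a b := by constructor <;> simp only [ha, hb] <;> linarith
    have hax : a < x := by simp only [ha]; linarith
    have hxb : x < b := by simp only [hb]; linarith
    have hmem : φ x ∈ Set.Ioo (φ a) (φ b) := ⟨hmono haI hxI hax, hmono hxI hbI hxb⟩
    have hsub : Set.Ioo (φ a) (φ b) ⊆ φ '' Set.Ioo a b :=
      intermediate_value_Ioo (by linarith) hcont
    refine Filter.mem_of_superset (Ioo_mem_nhds hmem.1 hmem.2) (hsub.trans ?_)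
    exact Set.image_mono (f := φ) (fun z hz => hab (Set.Ioo_subset_Icc_self hz))
  -- derivative of u at points of φ '' I
  set u : ℝ → ℝ := fun s => (y (ψ s)) ^ (k₂ + 1) with hu
  have hud : ∀ x ∈ I, HasDerivAt u ((k₂ + 1) * deriv y x) (φ x) := by
    intro x hx
    have hfix : ψ (φ x) = x := hinv x hx
    have hyx := hpos x hx
    have h1 : HasDerivAt y (deriv y x) (ψ (φ x)) := by
      rw [hfix]; exact (hy1 x hx).hasDerivAt
    have hyψ : HasDerivAt (fun s => y (ψ s)) (deriv y x * (y x) ^ (-k₂)) (φ x) :=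
      HasDerivAt.comp (φ x) h1 (hψd x hx)
    have hne : y (ψ (φ x)) ≠ 0 := by rw [hfix]; exact hyx.ne'
    have h2 := hyψ.rpow_const (p := k₂ + 1) (Or.inl hne)
    rw [hfix] at h2
    convert h2 using 1
    have he : k₂ + 1 - 1 = k₂ := by ring
    rw [he]
    have hcancel : (y x) ^ (-k₂) * (y x) ^ k₂ = 1 := by
      rw [← Real.rpow_add hyx]; simp
    linear_combination (-((k₂ + 1) * deriv y x)) * hcancel
  have hude : ∀ t ∈ φ '' I, deriv u t = (k₂ + 1) * deriv y (ψ t) := by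
    rintro t ⟨x, hx, rfl⟩
    rw [(hud x hx).deriv, hinv x hx]
  rintro t ⟨x, hx, rfl⟩
  have hfix : ψ (φ x) = x := hinv x hx
  have hyx := hpos x hx
  have h1 : HasDerivAt (deriv y) (deriv (deriv y) x) (ψ (φ x)) := by
    rw [hfix]; exact (hy2 x hx).hasDerivAt
  have hv : HasDerivAt (fun s => (k₂ + 1) * deriv y (ψ s))
      ((k₂ + 1) * (deriv (deriv y) x * (y x) ^ (-k₂))) (φ x) :=
    (HasDerivAt.comp (φ x) h1 (hψd x hx)).const_mul _
  have heq : deriv u =ᶠ[nhds (φ x)] fun s => (k₂ + 1) * deriv y (ψ s) := by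
    filter_upwards [hopen.mem_nhds ⟨x, hx, rfl⟩] with s hs using hude s hs
  have hderiv2 : deriv (deriv u) (φ x)
      = (k₂ + 1) * (deriv (deriv y) x * (y x) ^ (-k₂)) := by
    rw [heq.deriv_eq, hv.deriv]
  have hderiv1 : deriv u (φ x) = (k₂ + 1) * deriv y x := (hud x hx).deriv
  show deriv (deriv u) (φ x) + deriv u (φ x) + μ₁ * (k₂ + 1) * (y (ψ (φ x))) ^ (k₂ + 1) = 0
  rw [hderiv2, hderiv1, hfix]
  have hode' := hode x hx
  have hc1 : (y x) ^ k₂ * (y x) ^ (-k₂) = 1 := by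
    rw [← Real.rpow_add hyx]; simp
  have hc2 : (y x) ^ (2 * k₂ + 1) * (y x) ^ (-k₂) = (y x) ^ (k₂ + 1) := by
    rw [← Real.rpow_add hyx]; congr 1; ring
  linear_combination ((k₂ + 1) * (y x) ^ (-k₂)) * hode'
    - ((k₂ + 1) * deriv y x) * hc1 - (μ₁ * (k₂ + 1)) * hc2
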